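/- In the increasing flip graph of a subword complex SC(Q,ρ), there is at most one path between any two facets I and J along which the sequence of positions flipped out is strictly increasing. If it exists, its label sequence is lexicographically smallest among label sequences of all directed paths from I to J. -/

import Mathlib

open scoped Classical

/-- Directed walks in a graph `E`, recorded by the list of vertices after the start. -/
inductive DWalk {α : Type*} (E : α → α → Prop) : α → α → List α → Prop
  | nil (u : α) : DWalk E u u []
  | cons {u w v : α} {l : List α} : E u w → DWalk E w v l → DWalk E u v (w :: l)

/-- The sequence of edge labels along a walk from `u` with vertex list `l`. -/
def wLabels {α : Type*} (lab : α → α → ℕ) (u : α) (l : List α) : List ℕ :=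
  List.zipWith lab (u :: l) l

/-- A facet of the subword complex `SC(Q, ρ)`: a set of positions whose complement is
a reduced expression for `ρ` as a subword of `Q`. -/
def IsSCFacet {B W : Type*} [Group W] {M : CoxeterMatrix B} (cs : CoxeterSystem M W)
    {m : ℕ} (Q : Fin m → B) (ρ : W) (I : Finset (Fin m)) : Prop :=
  cs.wordProd ((Iᶜ.sort (· ≤ ·)).map Q) = ρ ∧ Iᶜ.card = cs.length ρ

/-- The edges of the increasing flip graph: `I → J` whenever `I∖{i} = J∖{j}` with
`i < j`. -/
def FlipEdge {B W : Type*} [Group W] {M : CoxeterMatrix B} (cs : CoxeterSystem M W)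
    {m : ℕ} (Q : Fin m → B) (ρ : W) (I J : Finset (Fin m)) : Prop :=
  IsSCFacet cs Q ρ I ∧ IsSCFacet cs Q ρ J ∧
    ∃ i ∈ I, ∃ j ∈ J, i < j ∧ I.erase i = J.erase j

/-- The positive edge label of a flip `I → J`: the position flipped out,
i.e. the unique element of `I ∖ J`. -/
def pLab {m : ℕ} (I J : Finset (Fin m)) : ℕ := (I \ J).sup Fin.val

/-- The negative edge label of a flip `I → J`: the position flipped in,
i.e. the unique element of `J ∖ I`. -/
def nLab {m : ℕ} (I J : Finset (Fin m)) : ℕ := (J \ I).sup Fin.val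

/-! ### Auxiliary lemmas -/

lemma myMapEraseIdx {α β : Type*} (f : α → β) : ∀ (l : List α) (k : ℕ),
    (l.eraseIdx k).map f = (l.map f).eraseIdx k
  | [], _ => by simp
  | _ :: _, 0 => rfl
  | a :: l, k+1 => by
      simp only [List.eraseIdx, List.map_cons]
      rw [myMapEraseIdx f l k]

lemma mySortErase {m : ℕ} (s : Finset (Fin m)) (x : Fin m) :
    (s.erase x).sort (· ≤ ·) = (s.sort (· ≤ ·)).erase x := by
  refine List.Perm.eq_of_pairwise' (Finset.pairwise_sort _ _)
    ((Finset.pairwise_sort s (· ≤ ·)).sublist (List.erase_sublist (a := x))) ?_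
  rw [← Multiset.coe_eq_coe, ← Multiset.coe_erase, Finset.sort_eq, Finset.sort_eq,
    Finset.erase_val]

lemma myLexAsymm : ∀ (x y : List ℕ), List.Lex (· < ·) x y → List.Lex (· < ·) y x → False := by
  intro x y h
  induction h with
  | nil => intro h2; cases h2
  | @rel a l₁ b l₂ h1 =>
      intro h2
      cases h2 with
      | rel h3 => omega
      | cons h3 => omega
  | @cons a l₁ l₂ h1 ih =>
      intro h2
      cases h2 with
      | rel h3 => omega
      | cons h3 => exact ih h3

lemma dwalk_nil_eq {α : Type*} {E : α → α → Prop} {u v : α} (h : DWalk E u v []) : u = v := by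
  cases h; rfl

lemma dwalk_cons_elim {α : Type*} {E : α → α → Prop} {u v w : α} {t : List α}
    (h : DWalk E u v (w :: t)) : E u w ∧ DWalk E w v t := by
  cases h; exact ⟨‹_›, ‹_›⟩

lemma wLabels_cons {α : Type*} (lab : α → α → ℕ) (u w : α) (t : List α) :
    wLabels lab u (w :: t) = lab u w :: wLabels lab w t := rfl

lemma wLabels_length {α : Type*} (lab : α → α → ℕ) (u : α) (l : List α) :
    (wLabels lab u l).length = l.length := by
  simp only [wLabels, List.length_zipWith, List.length_cons]
  omega

section
variable {B W : Type*} [Group W] {M : CoxeterMatrix B} (cs : CoxeterSystem M W)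
  {m : ℕ} (Q : Fin m → B) (ρ : W)

lemma three_eraseIdx (ω : List B) (hlen : ω.length = cs.length ρ + 1)
    {a b c : ℕ} (hab : a < b) (hbc : b < c) (hc : c < ω.length)
    (pa : cs.wordProd (ω.eraseIdx a) = ρ) (pb : cs.wordProd (ω.eraseIdx b) = ρ)
    (pc : cs.wordProd (ω.eraseIdx c) = ρ) : False := by
  have key : ∀ k, cs.wordProd (ω.eraseIdx k) = ρ →
      (cs.leftInvSeq ω).getD k 1 = ρ * (cs.wordProd ω)⁻¹ := by
    intro k hk
    have h := cs.getD_leftInvSeq_mul_wordProd ω k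
    rw [hk] at h
    exact eq_mul_inv_of_mul_eq h
  have tab : (cs.leftInvSeq ω).getD a 1 = (cs.leftInvSeq ω).getD b 1 := by
    rw [key a pa, key b pb]
  have tbc : (cs.leftInvSeq ω).getD b 1 = (cs.leftInvSeq ω).getD c 1 := by
    rw [key b pb, key c pc]
  set ω' := ω.eraseIdx b with hω'
  have hb' : b < ω.length := lt_trans hbc hc
  have len' : ω'.length = cs.length ρ := by
    have h2 := List.length_eraseIdx_add_one hb'
    rw [hω']; omega
  have red' : cs.IsReduced ω' := by
    unfold CoxeterSystem.IsReduced
    rw [pb, len']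
  have nodup := red'.nodup_leftInvSeq
  have hsplit : ω' = ω.take b ++ ω.drop (b+1) := List.eraseIdx_eq_take_drop_succ ω b
  have hlentake : (ω.take b).length = b := by
    rw [List.length_take]; omega
  have entry_a : (cs.leftInvSeq ω').getD a 1 = (cs.leftInvSeq ω).getD a 1 := by
    have h1 : ω'.take a = ω.take a := by
      rw [hsplit, List.take_append, hlentake,
        Nat.sub_eq_zero_of_le (le_of_lt hab), List.take_take,
        min_eq_left (le_of_lt hab), List.take_zero, List.append_nil]
    have h2 : ω'[a]? = ω[a]? := by
      rw [hsplit,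
        List.getElem?_append_left (by rw [hlentake]; exact hab),
        List.getElem?_take_of_lt hab]
    rw [cs.getD_leftInvSeq, cs.getD_leftInvSeq, h1, h2]
  have hc1b : b ≤ c - 1 := by omega
  have htake : ω'.take (c-1) = (ω.take c).eraseIdx b := by
    rw [hsplit, List.take_append, hlentake,
      List.take_of_length_le (by rw [hlentake]; exact hc1b),
      List.eraseIdx_eq_take_drop_succ, List.take_take, List.drop_take,
      min_eq_left (le_of_lt hbc)]
    congr 2
    omega
  have hget : ω'[c-1]? = ω[c]? := by
    rw [hsplit,
      List.getElem?_append_right (by rw [hlentake]; exact hc1b), hlentake,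
      List.getElem?_drop]
    congr 1
    omega
  have hprodtake : cs.wordProd (ω'.take (c-1)) =
      (cs.leftInvSeq ω).getD b 1 * cs.wordProd (ω.take c) := by
    rw [htake, ← cs.getD_leftInvSeq_mul_wordProd, cs.leftInvSeq_take]
    congr 1
    have hlenlis : ((cs.leftInvSeq ω).take c).length = c := by
      rw [List.length_take, cs.length_leftInvSeq]; omega
    rw [List.getD_eq_getElem _ _ (by omega : b < ((cs.leftInvSeq ω).take c).length),
      List.getElem_take, List.getD_eq_getElem _ _ (by rw [cs.length_leftInvSeq]; omega)]
  have entry_c : (cs.leftInvSeq ω').getD (c-1) 1 =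
      (cs.leftInvSeq ω).getD b 1 * (cs.leftInvSeq ω).getD c 1 *
        ((cs.leftInvSeq ω).getD b 1)⁻¹ := by
    rw [cs.getD_leftInvSeq, hprodtake, hget, cs.getD_leftInvSeq, cs.getD_leftInvSeq ω c]
    group
  have heq : (cs.leftInvSeq ω').getD a 1 = (cs.leftInvSeq ω').getD (c-1) 1 := by
    rw [entry_a, entry_c, ← tbc, ← tab]
    group
  have hlis : (cs.leftInvSeq ω').length = cs.length ρ := by
    rw [cs.length_leftInvSeq, len']
  have ha' : a < (cs.leftInvSeq ω').length := by omega
  have hc' : c - 1 < (cs.leftInvSeq ω').length := by omega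
  rw [List.getD_eq_getElem _ _ ha', List.getD_eq_getElem _ _ hc'] at heq
  have := (nodup.getElem_inj_iff).mp heq
  omega

lemma myFacetWord (D : Finset (Fin m)) (x : Fin m) :
    (((D.erase x).sort (· ≤ ·)).map Q) =
      ((D.sort (· ≤ ·)).map Q).eraseIdx ((D.sort (· ≤ ·)).idxOf x) := by
  rw [mySortErase, List.erase_eq_eraseIdx_of_idxOf (l := D.sort (· ≤ ·)) (a := x) rfl, myMapEraseIdx]

lemma flip_unique {I J J' : Finset (Fin m)} {i j j' : Fin m}
    (hI : IsSCFacet cs Q ρ I) (hJ : IsSCFacet cs Q ρ J) (hJ' : IsSCFacet cs Q ρ J')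
    (hi : i ∈ I) (hj : j ∈ J) (hj' : j' ∈ J') (hij : i ≠ j) (hij' : i ≠ j')
    (e : I.erase i = J.erase j) (e' : I.erase i = J'.erase j') : J = J' := by
  have hJeq : J = insert j (I.erase i) := by rw [e]; exact (Finset.insert_erase hj).symm
  have hJ'eq : J' = insert j' (I.erase i) := by rw [e']; exact (Finset.insert_erase hj').symm
  by_cases hjj : j = j'
  · rw [hJeq, hJ'eq, hjj]
  exfalso
  have hiIc : i ∉ Iᶜ := by simp [hi]
  set D : Finset (Fin m) := insert i Iᶜ with hD
  have hcomp : (I.erase i)ᶜ = D := Finset.compl_erase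
  have hiD : i ∈ D := Finset.mem_insert_self _ _
  have hjD : j ∈ D := by
    rw [← hcomp, Finset.mem_compl, e]
    exact Finset.notMem_erase j J
  have hj'D : j' ∈ D := by
    rw [← hcomp, Finset.mem_compl, e']
    exact Finset.notMem_erase j' J'
  have hDI : D.erase i = Iᶜ := Finset.erase_insert hiIc
  have hDJ : D.erase j = Jᶜ := by
    rw [hJeq, Finset.compl_insert, hcomp]
  have hDJ' : D.erase j' = J'ᶜ := by
    rw [hJ'eq, Finset.compl_insert, hcomp]
  set L := D.sort (· ≤ ·) with hL
  set ω := L.map Q with hω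
  have hLlen : L.length = Iᶜ.card + 1 := by
    rw [hL, Finset.length_sort, hD, Finset.card_insert_of_notMem hiIc]
  have hωlen : ω.length = cs.length ρ + 1 := by
    rw [hω, List.length_map, hLlen, hI.2]
  have prodOf : ∀ (x : Fin m) (S : Finset (Fin m)), D.erase x = Sᶜ → IsSCFacet cs Q ρ S →
      cs.wordProd (ω.eraseIdx (L.idxOf x)) = ρ := by
    intro x S hS hSf
    rw [hω, hL, ← myFacetWord Q D x, hS]
    exact hSf.1
  have pI := prodOf i I hDI hI
  have pJ := prodOf j J hDJ hJ
  have pJ' := prodOf j' J' hDJ' hJ'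
  have memL : ∀ x : Fin m, x ∈ D → x ∈ L := fun x hx => (Finset.mem_sort _).mpr hx
  have hbound : ∀ x : Fin m, x ∈ D → L.idxOf x < ω.length := by
    intro x hx
    rw [hω, List.length_map]
    exact List.idxOf_lt_length_iff.mpr (memL x hx)
  have hne : ∀ (x y : Fin m), x ∈ D → y ∈ D → x ≠ y → L.idxOf x ≠ L.idxOf y := by
    intro x y hx hy hxy h
    exact hxy ((List.idxOf_inj (memL x hx)).mp h)
  have h1 := hne i j hiD hjD hij
  have h2 := hne i j' hiD hj'D hij'
  have h3 := hne j j' hjD hj'D hjj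
  have b1 := hbound i hiD
  have b2 := hbound j hjD
  have b3 := hbound j' hj'D
  set ki := L.idxOf i
  set kj := L.idxOf j
  set kj' := L.idxOf j'
  rcases lt_trichotomy ki kj with hxy | hxy | hxy
  · rcases lt_trichotomy kj kj' with hyz | hyz | hyz
    · exact three_eraseIdx cs ρ ω hωlen hxy hyz b3 pI pJ pJ'
    · exact h3 hyz
    · rcases lt_trichotomy ki kj' with hxz | hxz | hxz
      · exact three_eraseIdx cs ρ ω hωlen hxz hyz b2 pI pJ' pJ
      · exact h2 hxz
      · exact three_eraseIdx cs ρ ω hωlen hxz hxy b2 pJ' pI pJ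
  · exact h1 hxy
  · rcases lt_trichotomy ki kj' with hxz | hxz | hxz
    · exact three_eraseIdx cs ρ ω hωlen hxy hxz b3 pJ pI pJ'
    · exact h2 hxz
    · rcases lt_trichotomy kj kj' with hyz | hyz | hyz
      · exact three_eraseIdx cs ρ ω hωlen hyz hxz b1 pJ pJ' pI
      · exact h3 hyz
      · exact three_eraseIdx cs ρ ω hωlen hyz hxy b1 pJ' pJ pI

lemma edge_struct {I J : Finset (Fin m)} (h : FlipEdge cs Q ρ I J) :
    ∃ i j : Fin m, i ∈ I ∧ i ∉ J ∧ j ∈ J ∧ j ∉ I ∧ i < j ∧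
      I.erase i = J.erase j ∧ J = insert j (I.erase i) ∧ pLab I J = i.val := by
  obtain ⟨hI, hJ, i, hi, j, hj, hij, he⟩ := h
  have hiJ : i ∉ J := by
    intro hmem
    have h2 : i ∈ J.erase j := Finset.mem_erase.mpr ⟨hij.ne, hmem⟩
    rw [← he] at h2
    exact Finset.notMem_erase i I h2
  have hjI : j ∉ I := by
    intro hmem
    have h2 : j ∈ I.erase i := Finset.mem_erase.mpr ⟨hij.ne', hmem⟩
    rw [he] at h2
    exact Finset.notMem_erase j J h2
  have hJeq : J = insert j (I.erase i) := by rw [he]; exact (Finset.insert_erase hj).symm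
  have hdiff : I \ J = {i} := by
    ext x
    simp only [Finset.mem_sdiff, Finset.mem_singleton]
    constructor
    · rintro ⟨hxI, hxJ⟩
      by_contra hxi
      have h2 : x ∈ I.erase i := Finset.mem_erase.mpr ⟨hxi, hxI⟩
      rw [he] at h2
      exact hxJ (Finset.mem_of_mem_erase h2)
    · rintro rfl; exact ⟨hi, hiJ⟩
  have hplab : pLab I J = i.val := by rw [pLab, hdiff, Finset.sup_singleton]
  exact ⟨i, j, hi, hiJ, hj, hjI, hij, he, hJeq, hplab⟩

lemma walk_enter : ∀ (l : List (Finset (Fin m))) (K J : Finset (Fin m)),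
    DWalk (FlipEdge cs Q ρ) K J l → ∀ x : Fin m, x ∈ J → x ∉ K →
    ∃ a ∈ wLabels pLab K l, a < x.val := by
  intro l
  induction l with
  | nil =>
      intro K J hw x hxJ hxK
      exact absurd ((dwalk_nil_eq hw) ▸ hxJ) hxK
  | cons w t ih =>
      intro K J hw x hxJ hxK
      obtain ⟨he, hrest⟩ := dwalk_cons_elim hw
      obtain ⟨i, j, hi, hiw, hj, hjK, hij, herase, hweq, hplab⟩ := edge_struct cs Q ρ he
      by_cases hxw : x ∈ w
      · have hxj : x = j := by
          rcases Finset.mem_insert.mp (hweq ▸ hxw) with h | h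
          · exact h
          · exact absurd (Finset.mem_of_mem_erase h) hxK
        refine ⟨pLab K w, List.mem_cons_self, ?_⟩
        rw [hplab, hxj]
        exact hij
      · obtain ⟨a, ha, hlt⟩ := ih w J hrest x hxJ hxw
        exact ⟨a, List.mem_cons_of_mem _ ha, hlt⟩

lemma walk_leave : ∀ (l : List (Finset (Fin m))) (K J : Finset (Fin m)),
    DWalk (FlipEdge cs Q ρ) K J l → ∀ x : Fin m, x ∈ K → x ∉ J →
    x.val ∈ wLabels pLab K l := by
  intro l
  induction l with
  | nil =>
      intro K J hw x hxK hxJ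
      exact absurd ((dwalk_nil_eq hw) ▸ hxK) hxJ
  | cons w t ih =>
      intro K J hw x hxK hxJ
      obtain ⟨he, hrest⟩ := dwalk_cons_elim hw
      obtain ⟨i, j, hi, hiw, hj, hjK, hij, herase, hweq, hplab⟩ := edge_struct cs Q ρ he
      by_cases hxw : x ∈ w
      · exact List.mem_cons_of_mem _ (ih w J hrest x hxw hxJ)
      · have hxi : x = i := by
          by_contra hxi
          exact hxw (hweq ▸ Finset.mem_insert_of_mem (Finset.mem_erase.mpr ⟨hxi, hxK⟩))
        rw [wLabels_cons, hplab, hxi]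
        exact List.mem_cons_self

lemma walk_min : ∀ (l : List (Finset (Fin m))) (K J : Finset (Fin m)),
    DWalk (FlipEdge cs Q ρ) K J l → l ≠ [] →
    ∃ x : Fin m, x ∈ K ∧ x ∉ J ∧ ∀ a ∈ wLabels pLab K l, x.val ≤ a := by
  intro l
  induction l with
  | nil => intro K J _ h; exact absurd rfl h
  | cons w t ih =>
      intro K J hw _
      obtain ⟨he, hrest⟩ := dwalk_cons_elim hw
      obtain ⟨i, j, hi, hiw, hj, hjK, hij, herase, hweq, hplab⟩ := edge_struct cs Q ρ he
      rcases eq_or_ne t [] with ht | ht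
      · subst ht
        have hwJ : w = J := dwalk_nil_eq hrest
        refine ⟨i, hi, hwJ ▸ hiw, ?_⟩
        intro a ha
        rcases List.mem_cons.mp ha with h | h
        · rw [h, hplab]
        · exact absurd h List.not_mem_nil
      · obtain ⟨y, hyw, hyJ, hymin⟩ := ih w J hrest ht
        by_cases hle : i.val ≤ y.val
        · have hiJ : i ∉ J := by
            intro hmem
            obtain ⟨a, ha, hlt⟩ := walk_enter cs Q ρ t w J hrest i hmem hiw
            have := hymin a ha
            omega
          refine ⟨i, hi, hiJ, ?_⟩
          intro a ha
          rcases List.mem_cons.mp ha with h | h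
          · rw [h, hplab]
          · have := hymin a h
            omega
        · push_neg at hle
          have hyK : y ∈ K := by
            have hyj : y ≠ j := by
              intro hyj
              have : i < j := hij
              rw [Fin.lt_def] at this
              rw [hyj] at hle
              omega
            rcases Finset.mem_insert.mp (hweq ▸ hyw) with h | h
            · exact absurd h hyj
            · exact Finset.mem_of_mem_erase h
          refine ⟨y, hyK, hyJ, ?_⟩
          intro a ha
          rcases List.mem_cons.mp ha with h | h
          · rw [h, hplab]
            omega
          · exact hymin a h

lemma walk_det : ∀ (l l' : List (Finset (Fin m))) (K J : Finset (Fin m)),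
    DWalk (FlipEdge cs Q ρ) K J l → DWalk (FlipEdge cs Q ρ) K J l' →
    wLabels pLab K l = wLabels pLab K l' → l = l' := by
  intro l
  induction l with
  | nil =>
      intro l' K J _ _ hlab
      have := congrArg List.length hlab
      rw [wLabels_length, wLabels_length] at this
      exact (List.length_eq_zero_iff.mp this.symm).symm
  | cons w t ih =>
      intro l' K J hw hw' hlab
      rcases l' with _ | ⟨w', t'⟩
      · have := congrArg List.length hlab
        rw [wLabels_length, wLabels_length] at this
        simp at this
      obtain ⟨he, hrest⟩ := dwalk_cons_elim hw
      obtain ⟨he', hrest'⟩ := dwalk_cons_elim hw'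
      obtain ⟨i, j, hi, hiw, hj, hjK, hij, herase, hweq, hplab⟩ := edge_struct cs Q ρ he
      obtain ⟨i', j', hi', hiw', hj', hjK', hij', herase', hweq', hplab'⟩ :=
        edge_struct cs Q ρ he'
      rw [wLabels_cons, wLabels_cons] at hlab
      have hhead : pLab K w = pLab K w' := (List.cons.injEq _ _ _ _ ▸ hlab).1
      have hii : i = i' := by
        apply Fin.val_injective
        rw [← hplab, ← hplab', hhead]
      subst hii
      have hww : w = w' :=
        flip_unique cs Q ρ he.1 he.2.1 he'.2.1 hi hj hj' hij.ne hij'.ne herase herase'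
      subst hww
      have htail : wLabels pLab w t = wLabels pLab w t' := (List.cons.injEq _ _ _ _ ▸ hlab).2
      rw [ih t' w J hrest hrest' htail]

lemma walk_lex : ∀ (l : List (Finset (Fin m))) (K J : Finset (Fin m)),
    DWalk (FlipEdge cs Q ρ) K J l → List.Chain' (· < ·) (wLabels pLab K l) →
    ∀ l' : List (Finset (Fin m)), DWalk (FlipEdge cs Q ρ) K J l' →
      List.Lex (· < ·) (wLabels pLab K l) (wLabels pLab K l') ∨
        wLabels pLab K l = wLabels pLab K l' := by
  intro l
  induction l with
  | nil =>
      intro K J _ _ l' _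
      rcases l' with _ | ⟨w', t'⟩
      · right; rfl
      · left; exact List.Lex.nil
  | cons w t ih =>
      intro K J hw hchain l' hw'
      obtain ⟨he, hrest⟩ := dwalk_cons_elim hw
      obtain ⟨i, j, hi, hiw, hj, hjK, hij, herase, hweq, hplab⟩ := edge_struct cs Q ρ he
      rcases l' with _ | ⟨w', t'⟩
      · exfalso
        have hKJ : K = J := dwalk_nil_eq hw'
        obtain ⟨x, hxK, hxJ, _⟩ := walk_min cs Q ρ (w :: t) K J hw (by simp)
        exact hxJ (hKJ ▸ hxK)
      obtain ⟨he', hrest'⟩ := dwalk_cons_elim hw'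
      obtain ⟨i', j', hi', hiw', hj', hjK', hij', herase', hweq', hplab'⟩ :=
        edge_struct cs Q ρ he'
      obtain ⟨x, hxK, hxJ, hxmin⟩ := walk_min cs Q ρ (w' :: t') K J hw' (by simp)
      have hx1 : x.val ≤ i'.val := by
        have := hxmin (pLab K w') List.mem_cons_self
        rw [hplab'] at this
        exact this
      have hx2 : i.val ≤ x.val := by
        have hmem : x.val ∈ wLabels pLab K (w :: t) := walk_leave cs Q ρ _ K J hw x hxK hxJ
        rw [wLabels_cons] at hmem
        rcases List.mem_cons.mp hmem with h | h
        · rw [hplab] at h; omega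
        · have hpw := List.rel_of_pairwise_cons
            (List.isChain_iff_pairwise.mp ((wLabels_cons pLab K w t) ▸ hchain)) h
          rw [hplab] at hpw
          omega
      rcases lt_or_eq_of_le (le_trans hx2 hx1) with hlt | heq
      · left
        rw [wLabels_cons, wLabels_cons]
        apply List.Lex.rel
        rw [hplab, hplab']
        exact hlt
      · have hii : i = i' := Fin.val_injective heq
        subst hii
        have hww : w = w' :=
          flip_unique cs Q ρ he.1 he.2.1 he'.2.1 hi hj hj' hij.ne hij'.ne herase herase'
        subst hww
        have hchain' : List.Chain' (· < ·) (wLabels pLab w t) :=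
          ((wLabels_cons pLab K w t) ▸ hchain).tail
        rcases ih w J hrest hchain' t' hrest' with h | h
        · left
          rw [wLabels_cons, wLabels_cons]
          exact List.Lex.cons h
        · right
          rw [wLabels_cons, wLabels_cons, h]
end

theorem rising_path_unique_and_lex_first {B W : Type*} [Group W] [Finite W]
    {M : CoxeterMatrix B} (cs : CoxeterSystem M W)
    {m : ℕ} (Q : Fin m → B) (ρ : W) :
    ∀ I J : Finset (Fin m),
      (∀ l l' : List (Finset (Fin m)),
        DWalk (FlipEdge cs Q ρ) I J l → List.Chain' (· < ·) (wLabels pLab I l) →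
        DWalk (FlipEdge cs Q ρ) I J l' → List.Chain' (· < ·) (wLabels pLab I l') →
          l = l') ∧
      (∀ l : List (Finset (Fin m)),
        DWalk (FlipEdge cs Q ρ) I J l → List.Chain' (· < ·) (wLabels pLab I l) →
        ∀ l' : List (Finset (Fin m)), DWalk (FlipEdge cs Q ρ) I J l' →
          List.Lex (· < ·) (wLabels pLab I l) (wLabels pLab I l') ∨
            wLabels pLab I l = wLabels pLab I l') := by
  intro I J
  constructor
  · intro l l' hw hc hw' hc'
    have hlab : wLabels pLab I l = wLabels pLab I l' := by
      rcases walk_lex cs Q ρ l I J hw hc l' hw' with h1 | h1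
      · rcases walk_lex cs Q ρ l' I J hw' hc' l hw with h2 | h2
        · exact absurd h2 (fun h2 => myLexAsymm _ _ h1 h2)
        · exact h2.symm
      · exact h1
    exact walk_det cs Q ρ l l' I J hw hw' hlab
  · intro l hw hc l' hw'
    exact walk_lex cs Q ρ l I J hw hc l' hw'
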